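/- Assume in addition that f(x) → +∞ as x → +∞. Let (S, I) be a traveling wave profile with speed c > 0 such that 0 < S(ξ) < S₀ and I(ξ) > 0 for all ξ ∈ ℝ. If limsup_{ξ→+∞} I(ξ) = +∞, then lim_{ξ→+∞} I(ξ) = +∞. -/

import Mathlib

open Real Filter MeasureTheory intervalIntegral Set Topology

/-- Integration identity for the discrete-diffusion traveling wave equations. -/
private lemma key_int (c d : ℝ) (u h : ℝ → ℝ) (hu : ContDiff ℝ 1 u) (hh : Continuous h)
    (heq : ∀ t : ℝ, c * deriv u t = d * (u (t+1) + u (t-1) - 2 * u t) + h t) (x y : ℝ) :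
    c * (u y - u x) = d * ((∫ t in y..y+1, u t) - (∫ t in x..x+1, u t)
      + ((∫ t in (x-1)..x, u t) - (∫ t in (y-1)..y, u t))) + ∫ t in x..y, h t := by
  have hcu : Continuous u := hu.continuous
  have hcd : Continuous (deriv u) := hu.continuous_deriv le_rfl
  have hint : ∀ a b : ℝ, IntervalIntegrable u volume a b := fun a b =>
    hcu.intervalIntegrable a b
  have h1 : Continuous (fun t : ℝ => u (t+1)) := hcu.comp (continuous_id.add continuous_const)
  have h2 : Continuous (fun t : ℝ => u (t-1)) := hcu.comp (continuous_id.sub continuous_const)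
  have hftc : ∫ t in x..y, deriv u t = u y - u x :=
    integral_deriv_eq_sub (fun t _ => hu.differentiable one_ne_zero t) (hcd.intervalIntegrable x y)
  have hin : Continuous (fun t : ℝ => u (t+1) + u (t-1) - 2*u t) :=
    (h1.add h2).sub (continuous_const.mul hcu)
  have base : ∫ t in x..y, (d * (u (t+1) + u (t-1) - 2 * u t) + h t) = c * (u y - u x) := by
    have hcongr : ∫ t in x..y, (d * (u (t+1) + u (t-1) - 2 * u t) + h t)
        = ∫ t in x..y, c * deriv u t :=
      integral_congr (fun t _ => (heq t).symm)
    rw [hcongr, intervalIntegral.integral_const_mul, hftc]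
  have eA : ∫ t in x..y, (d * (u (t+1) + u (t-1) - 2 * u t) + h t)
      = d * ((∫ t in (x+1)..(y+1), u t) + (∫ t in (x-1)..(y-1), u t) - 2 * ∫ t in x..y, u t)
        + ∫ t in x..y, h t := by
    rw [integral_add ((show Continuous fun t => d * (u (t+1) + u (t-1) - 2 * u t) from continuous_const.mul hin).intervalIntegrable _ _)
        (hh.intervalIntegrable _ _),
      intervalIntegral.integral_const_mul,
      integral_sub ((show Continuous fun t => u (t+1) + u (t-1) from h1.add h2).intervalIntegrable _ _)
        ((show Continuous fun t => 2 * u t from continuous_const.mul hcu).intervalIntegrable _ _),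
      integral_add (h1.intervalIntegrable _ _) (h2.intervalIntegrable _ _),
      intervalIntegral.integral_const_mul, integral_comp_add_right u 1, integral_comp_sub_right u 1]
  have s1a : (∫ t in x..x+1, u t) + (∫ t in (x+1)..(y+1), u t) = ∫ t in x..y+1, u t :=
    integral_add_adjacent_intervals (hint _ _) (hint _ _)
  have s1b : (∫ t in x..y, u t) + (∫ t in y..y+1, u t) = ∫ t in x..y+1, u t :=
    integral_add_adjacent_intervals (hint _ _) (hint _ _)
  have s2a : (∫ t in (x-1)..x, u t) + (∫ t in x..y-1, u t) = ∫ t in (x-1)..(y-1), u t :=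
    integral_add_adjacent_intervals (hint _ _) (hint _ _)
  have s2b : (∫ t in x..y-1, u t) + (∫ t in (y-1)..y, u t) = ∫ t in x..y, u t :=
    integral_add_adjacent_intervals (hint _ _) (hint _ _)
  rw [eA] at base
  linear_combination -base + d * s1a - d * s1b - d * s2a + d * s2b

set_option maxHeartbeats 1000000 in
/-- **Dichotomy for the infected component at `+∞`** (Lemma 3.4).
Assume additionally `f(x) → +∞` as `x → +∞`.  Let `(S, I)` be a traveling wave
profile with speed `c > 0` satisfying `0 < S < S₀` and `I > 0`.  If
`limsup_{ξ→+∞} I(ξ) = +∞`, then `lim_{ξ→+∞} I(ξ) = +∞`. -/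
theorem I_tendsto_atTop_of_limsup_atTop
    (d₁ d₂ Λ β μ₁ μ₂ : ℝ) (hd₁ : 0 < d₁) (hd₂ : 0 < d₂) (hΛ : 0 < Λ)
    (hβ : 0 < β) (hμ₁ : 0 < μ₁) (hμ₂ : 0 < μ₂)
    (f : ℝ → ℝ) (hf0 : f 0 = 0) (hfC1 : ContDiff ℝ 1 f)
    (hf' : ∀ I : ℝ, 0 ≤ I → 0 < deriv f I)
    (hfratio : ∀ I J : ℝ, 0 < I → I ≤ J → f J / J ≤ f I / I)
    (hfinf : Tendsto f atTop atTop)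
    (c : ℝ) (hc : 0 < c)
    (S I : ℝ → ℝ) (hS : ContDiff ℝ 1 S) (hI : ContDiff ℝ 1 I)
    (hSeq : ∀ ξ : ℝ, c * deriv S ξ =
      d₁ * (S (ξ + 1) + S (ξ - 1) - 2 * S ξ) + Λ - μ₁ * S ξ - β * S ξ * f (I ξ))
    (hIeq : ∀ ξ : ℝ, c * deriv I ξ =
      d₂ * (I (ξ + 1) + I (ξ - 1) - 2 * I ξ) + β * S ξ * f (I ξ) - μ₂ * I ξ)
    (hSbd : ∀ ξ : ℝ, 0 < S ξ ∧ S ξ < Λ / μ₁) (hIpos : ∀ ξ : ℝ, 0 < I ξ)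
    (hlimsup : ∀ M : ℝ, ∃ᶠ ξ in atTop, M < I ξ) :
    Tendsto I atTop atTop := by
  by_contra hnot
  rw [tendsto_atTop_atTop] at hnot
  push_neg at hnot
  obtain ⟨B₀, hB₀⟩ := hnot
  set S₀ : ℝ := Λ / μ₁ with hS₀def
  have hS₀ : 0 < S₀ := div_pos hΛ hμ₁
  set k : ℝ := (2*d₂ + μ₂)/c with hkdef
  have hk : 0 < k := by positivity
  have hdiffI : Differentiable ℝ I := hI.differentiable one_ne_zero
  have hcI : Continuous I := hI.continuous
  have hcS : Continuous S := hS.continuous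
  have hcf : Continuous f := hfC1.continuous
  -- f is nonnegative on nonnegative arguments
  have hfmono : StrictMonoOn f (Set.Ici (0:ℝ)) := by
    apply strictMonoOn_of_deriv_pos (convex_Ici 0) hcf.continuousOn
    intro z hz
    rw [interior_Ici] at hz
    exact hf' z hz.le
  have hfnn : ∀ z : ℝ, 0 ≤ z → 0 ≤ f z := by
    intro z hz
    rcases eq_or_lt_of_le hz with h|h
    · rw [← h, hf0]
    · have h2 := hfmono Set.self_mem_Ici hz h
      rw [hf0] at h2
      exact h2.le
  -- Gronwall-type lower bound
  have hmono : Monotone (fun t => I t * Real.exp (k*t)) := by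
    have hdiff : Differentiable ℝ (fun t => I t * Real.exp (k*t)) :=
      hdiffI.mul ((differentiable_id.const_mul k).exp)
    apply monotone_of_deriv_nonneg hdiff
    intro t
    have hx : HasDerivAt (fun t => I t * Real.exp (k*t))
        (deriv I t * Real.exp (k*t) + I t * (Real.exp (k*t) * k)) t := by
      have h1 : HasDerivAt (fun t : ℝ => k * t) k t := by
        simpa using (hasDerivAt_id t).const_mul k
      exact (hdiffI t).hasDerivAt.mul h1.exp
    rw [hx.deriv]
    have hlow : -((2*d₂+μ₂) * I t) ≤ c * deriv I t := by
      have h1 := hIeq t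
      have h2 : 0 < I (t+1) := hIpos _
      have h3 : 0 < I (t-1) := hIpos _
      have h4 : 0 ≤ β * S t * f (I t) :=
        mul_nonneg (mul_nonneg hβ.le (hSbd t).1.le) (hfnn _ (hIpos t).le)
      linarith only [h1, h4, mul_pos hd₂ h2, mul_pos hd₂ h3]
    have hE : 0 < Real.exp (k*t) := Real.exp_pos _
    have hkc : k * c = 2*d₂+μ₂ := div_mul_cancel₀ _ (ne_of_gt hc)
    have hcg : 0 ≤ c * (deriv I t * Real.exp (k*t) + I t * (Real.exp (k*t) * k)) := by
      have h5 := mul_le_mul_of_nonneg_right hlow hE.le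
      have h6 : c * (I t * (Real.exp (k*t) * k)) = (2*d₂+μ₂) * I t * Real.exp (k*t) := by
        rw [← hkc]; ring
      linarith only [h5, h6]
    exact (mul_nonneg_iff_of_pos_left hc).mp hcg
  have Gb : ∀ x y : ℝ, x ≤ y → I x ≤ Real.exp (k*(y-x)) * I y := by
    intro x y hxy
    have h := hmono hxy
    have hEx : 0 < Real.exp (k*x) := Real.exp_pos _
    rw [show k*(y-x) = k*y - k*x by ring, Real.exp_sub, div_mul_eq_mul_div,
      le_div_iff₀ hEx]
    calc I x * Real.exp (k*x) ≤ I y * Real.exp (k*y) := h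
      _ = Real.exp (k*y) * I y := by ring
  set E : ℝ := Real.exp k with hEdef
  have hEpos : 0 < E := Real.exp_pos _
  -- integral bounds over unit intervals
  have intbdI : ∀ a : ℝ, (∫ t in a..a+1, I t) ≤ E * I (a+1) := by
    intro a
    have hb : ∀ t ∈ Set.Icc a (a+1), I t ≤ E * I (a+1) := by
      intro t ht
      have h1 := Gb t (a+1) ht.2
      have h2 : Real.exp (k*(a+1-t)) ≤ E := by
        rw [hEdef]
        apply Real.exp_le_exp.mpr
        have h3 : a + 1 - t ≤ 1 := by linarith only [ht.1]
        have h4 := mul_le_mul_of_nonneg_left h3 hk.le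
        linarith only [h4]
      calc I t ≤ Real.exp (k*(a+1-t)) * I (a+1) := h1
        _ ≤ E * I (a+1) := mul_le_mul_of_nonneg_right h2 (hIpos _).le
    calc (∫ t in a..a+1, I t) ≤ ∫ _t in a..a+1, E * I (a+1) :=
        integral_mono_on (by linarith) (hcI.intervalIntegrable _ _)
          intervalIntegrable_const hb
      _ = E * I (a+1) := by simp
  have intbdS : ∀ a : ℝ, (∫ t in a..a+1, S t) ≤ S₀ := by
    intro a
    calc (∫ t in a..a+1, S t) ≤ ∫ _t in a..a+1, S₀ :=
        integral_mono_on (by linarith) (hcS.intervalIntegrable _ _)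
          intervalIntegrable_const (fun t _ => (hSbd t).2.le)
      _ = S₀ := by simp
  have intnnI : ∀ a b : ℝ, a ≤ b → 0 ≤ ∫ t in a..b, I t := fun a b hab =>
    integral_nonneg hab (fun t _ => (hIpos t).le)
  have intnnS : ∀ a b : ℝ, a ≤ b → 0 ≤ ∫ t in a..b, S t := fun a b hab =>
    integral_nonneg hab (fun t _ => (hSbd t).1.le)
  -- constants
  set B : ℝ := max B₀ ((Λ+1)/μ₂) with hBdef
  have hBpos : 0 < B := lt_of_lt_of_le (by positivity) (le_max_right _ _)
  have hB1 : Λ + 1 ≤ μ₂ * B := by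
    have h := le_max_right B₀ ((Λ+1)/μ₂)
    rw [div_le_iff₀ hμ₂] at h
    linarith only [h]
  set K : ℝ := E*(2*d₂+μ₂)*B + d₂*E*B + c*S₀ + 2*d₁*S₀ with hKdef
  have hK : 0 ≤ K := by positivity
  set M : ℝ := Real.exp (k*K) * B with hMdef
  have hBM : B ≤ M := by
    have h : (1:ℝ) ≤ Real.exp (k*K) := Real.one_le_exp (by positivity)
    nlinarith [h, hBpos]
  -- choose points
  obtain ⟨t₀, ht₀ge, ht₀⟩ := hB₀ 0
  obtain ⟨p, hpge, hpM⟩ := (frequently_atTop.mp (hlimsup M)) t₀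
  obtain ⟨t₁, ht₁ge, ht₁⟩ := hB₀ p
  have ht₀B : I t₀ ≤ B := le_trans ht₀.le (le_max_left _ _)
  have ht₁B : I t₁ ≤ B := le_trans ht₁.le (le_max_left _ _)
  have hpB : B < I p := lt_of_le_of_lt hBM hpM
  -- the dip points surrounding p
  set A₁ : Set ℝ := Set.Icc t₀ p ∩ {t | I t ≤ B} with hA₁def
  have hA₁c : IsCompact A₁ := isCompact_Icc.inter_right (isClosed_le hcI continuous_const)
  have hA₁ne : A₁.Nonempty := ⟨t₀, ⟨le_rfl, hpge⟩, ht₀B⟩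
  set x₁ : ℝ := sSup A₁ with hx₁def
  have hx₁mem : x₁ ∈ A₁ := hA₁c.sSup_mem hA₁ne
  have hx₁p : x₁ < p :=
    lt_of_le_of_ne hx₁mem.1.2 (fun h => absurd (h ▸ hx₁mem.2) (not_le.mpr hpB))
  set A₂ : Set ℝ := Set.Icc p t₁ ∩ {t | I t ≤ B} with hA₂def
  have hA₂c : IsCompact A₂ := isCompact_Icc.inter_right (isClosed_le hcI continuous_const)
  have hA₂ne : A₂.Nonempty := ⟨t₁, ⟨ht₁ge, le_rfl⟩, ht₁B⟩
  set y₁ : ℝ := sInf A₂ with hy₁def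
  have hy₁mem : y₁ ∈ A₂ := hA₂c.sInf_mem hA₂ne
  have hpy₁ : p < y₁ :=
    lt_of_le_of_ne hy₁mem.1.1 (fun h => absurd (h ▸ hy₁mem.2) (not_le.mpr hpB))
  have hx₁y₁ : x₁ < y₁ := hx₁p.trans hpy₁
  have hinter : ∀ t, x₁ < t → t < y₁ → B < I t := by
    intro t h1 h2
    by_contra hle
    push_neg at hle
    rcases le_or_gt t p with h|h
    · have htA : t ∈ A₁ := ⟨⟨le_trans hx₁mem.1.1 h1.le, h⟩, hle⟩
      exact absurd (le_csSup hA₁c.bddAbove htA) (not_le.mpr h1)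
    · have htA : t ∈ A₂ := ⟨⟨h.le, le_trans h2.le hy₁mem.1.2⟩, hle⟩
      exact absurd (csInf_le hA₂c.bddBelow htA) (not_le.mpr h2)
  have hx₁B : I x₁ = B := by
    refine le_antisymm hx₁mem.2 ?_
    have htend : Tendsto I (𝓝[>] x₁) (𝓝 (I x₁)) :=
      (hcI.tendsto x₁).mono_left nhdsWithin_le_nhds
    refine ge_of_tendsto htend ?_
    filter_upwards [Ioo_mem_nhdsGT_of_mem (⟨le_rfl, hx₁y₁⟩ : x₁ ∈ Set.Ico x₁ y₁)] with t ht
    exact (hinter t ht.1 ht.2).le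
  have hy₁B : I y₁ = B := by
    refine le_antisymm hy₁mem.2 ?_
    have htend : Tendsto I (𝓝[<] y₁) (𝓝 (I y₁)) :=
      (hcI.tendsto y₁).mono_left nhdsWithin_le_nhds
    refine ge_of_tendsto htend ?_
    filter_upwards [Ioo_mem_nhdsLT_of_mem (⟨hx₁y₁, le_rfl⟩ : y₁ ∈ Set.Ioc x₁ y₁)] with t ht
    exact (hinter t ht.1 ht.2).le
  -- the derivative of I at y₁ is nonpositive
  have hderiv_y : deriv I y₁ ≤ 0 := by
    have hs := hasDerivAt_iff_tendsto_slope.mp (hdiffI y₁).hasDerivAt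
    have hs2 : Tendsto (slope I y₁) (𝓝[<] y₁) (𝓝 (deriv I y₁)) :=
      hs.mono_left (nhdsWithin_mono _ (fun t ht => ne_of_lt ht))
    refine le_of_tendsto hs2 ?_
    filter_upwards [Ioo_mem_nhdsLT_of_mem (⟨hx₁y₁, le_rfl⟩ : y₁ ∈ Set.Ioc x₁ y₁)] with t ht
    rw [slope_def_field]
    apply div_nonpos_of_nonneg_of_nonpos
    · rw [hy₁B]
      exact sub_nonneg.mpr (hinter t ht.1 ht.2).le
    · linarith [ht.2]
  have hy₁p1 : d₂ * I (y₁+1) ≤ (2*d₂+μ₂) * B := by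
    have h1 := hIeq y₁
    have h2 : c * deriv I y₁ ≤ 0 := mul_nonpos_iff.mpr (Or.inl ⟨hc.le, hderiv_y⟩)
    have h3 : 0 < d₂ * I (y₁-1) := mul_pos hd₂ (hIpos _)
    have h4 : 0 ≤ β * S y₁ * f (I y₁) :=
      mul_nonneg (mul_nonneg hβ.le (hSbd y₁).1.le) (hfnn _ (hIpos _).le)
    have h5 : μ₂ * I y₁ = μ₂ * B := by rw [hy₁B]
    have h6 : d₂ * I y₁ = d₂ * B := by rw [hy₁B]
    linarith only [h1, h2, h3, h4, h5, h6]
  -- continuity of the reaction terms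
  have hcfI : Continuous fun t => β * S t * f (I t) :=
    (continuous_const.mul hcS).mul (hcf.comp hcI)
  have hcontI : Continuous fun t => β * S t * f (I t) - μ₂ * I t :=
    hcfI.sub (continuous_const.mul hcI)
  have hcontS : Continuous fun t => Λ - μ₁ * S t - β * S t * f (I t) :=
    (continuous_const.sub (continuous_const.mul hcS)).sub hcfI
  have keyI := key_int c d₂ I (fun t => β * S t * f (I t) - μ₂ * I t) hI hcontI
    (fun t => by rw [hIeq t]; ring) x₁ y₁
  have keyS := key_int c d₁ S (fun t => Λ - μ₁ * S t - β * S t * f (I t)) hS hcontS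
    (fun t => by rw [hSeq t]; ring) x₁ y₁
  have splitI : (∫ t in x₁..y₁, (β * S t * f (I t) - μ₂ * I t))
      = (∫ t in x₁..y₁, β * S t * f (I t)) - μ₂ * ∫ t in x₁..y₁, I t := by
    rw [integral_sub (hcfI.intervalIntegrable _ _)
      ((show Continuous fun t => μ₂ * I t from continuous_const.mul hcI).intervalIntegrable _ _), intervalIntegral.integral_const_mul]
  have splitS : (∫ t in x₁..y₁, (Λ - μ₁ * S t - β * S t * f (I t)))
      = Λ * (y₁ - x₁) - μ₁ * (∫ t in x₁..y₁, S t) - ∫ t in x₁..y₁, β * S t * f (I t) := by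
    rw [integral_sub ((show Continuous fun t => Λ - μ₁ * S t from continuous_const.sub (continuous_const.mul hcS)).intervalIntegrable _ _)
        (hcfI.intervalIntegrable _ _),
      integral_sub intervalIntegrable_const ((show Continuous fun t => μ₁ * S t from continuous_const.mul hcS).intervalIntegrable _ _),
      intervalIntegral.integral_const, intervalIntegral.integral_const_mul]
    simp [smul_eq_mul]
    ring
  have hylex : x₁ ≤ y₁ := hx₁y₁.le
  have lowQ : B * (y₁ - x₁) ≤ ∫ t in x₁..y₁, I t := by
    have hb : ∀ t ∈ Set.Icc x₁ y₁, B ≤ I t := by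
      intro t ht
      rcases eq_or_lt_of_le ht.1 with h|h
      · rw [← h, hx₁B]
      · rcases eq_or_lt_of_le ht.2 with h2|h2
        · rw [h2, hy₁B]
        · exact (hinter t h h2).le
    calc B * (y₁ - x₁) = ∫ _t in x₁..y₁, B := by simp [smul_eq_mul]; ring
      _ ≤ ∫ t in x₁..y₁, I t :=
        integral_mono_on hylex intervalIntegrable_const (hcI.intervalIntegrable _ _) hb
  -- boundary integral bounds
  have b1 : ∫ t in y₁..y₁+1, I t ≤ E * I (y₁+1) := intbdI y₁
  have b2 : 0 ≤ ∫ t in x₁..x₁+1, I t := intnnI _ _ (by linarith)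
  have b3 : ∫ t in (x₁-1)..x₁, I t ≤ E * I x₁ := by simpa using intbdI (x₁-1)
  have b4 : 0 ≤ ∫ t in (y₁-1)..y₁, I t := intnnI _ _ (by linarith)
  have c1 : ∫ t in y₁..y₁+1, S t ≤ S₀ := intbdS y₁
  have c2 : 0 ≤ ∫ t in x₁..x₁+1, S t := intnnS _ _ (by linarith)
  have c3 : ∫ t in (x₁-1)..x₁, S t ≤ S₀ := by simpa using intbdS (x₁-1)
  have c4 : 0 ≤ ∫ t in (y₁-1)..y₁, S t := intnnS _ _ (by linarith)
  have hd2b1 : d₂ * (∫ t in y₁..y₁+1, I t) ≤ E * ((2*d₂+μ₂)*B) := by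
    calc d₂ * (∫ t in y₁..y₁+1, I t) ≤ d₂ * (E * I (y₁+1)) :=
        mul_le_mul_of_nonneg_left b1 hd₂.le
      _ = E * (d₂ * I (y₁+1)) := by ring
      _ ≤ E * ((2*d₂+μ₂)*B) := mul_le_mul_of_nonneg_left hy₁p1 hEpos.le
  have hd2b3 : d₂ * (∫ t in (x₁-1)..x₁, I t) ≤ d₂ * E * B := by
    calc d₂ * (∫ t in (x₁-1)..x₁, I t) ≤ d₂ * (E * I x₁) :=
        mul_le_mul_of_nonneg_left b3 hd₂.le
      _ = d₂ * E * B := by rw [hx₁B]; ring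
  have hd2b2 : 0 ≤ d₂ * ∫ t in x₁..x₁+1, I t := mul_nonneg hd₂.le b2
  have hd2b4 : 0 ≤ d₂ * ∫ t in (y₁-1)..y₁, I t := mul_nonneg hd₂.le b4
  have hd1c1 : d₁ * (∫ t in y₁..y₁+1, S t) ≤ d₁ * S₀ := mul_le_mul_of_nonneg_left c1 hd₁.le
  have hd1c3 : d₁ * (∫ t in (x₁-1)..x₁, S t) ≤ d₁ * S₀ := mul_le_mul_of_nonneg_left c3 hd₁.le
  have hd1c2 : 0 ≤ d₁ * ∫ t in x₁..x₁+1, S t := mul_nonneg hd₁.le c2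
  have hd1c4 : 0 ≤ d₁ * ∫ t in (y₁-1)..y₁, S t := mul_nonneg hd₁.le c4
  have hμ₁V : 0 ≤ μ₁ * ∫ t in x₁..y₁, S t := mul_nonneg hμ₁.le (intnnS _ _ hylex)
  have hμ₂Q : μ₂ * (B * (y₁-x₁)) ≤ μ₂ * ∫ t in x₁..y₁, I t :=
    mul_le_mul_of_nonneg_left lowQ hμ₂.le
  have hcS' : c * (S x₁ - S y₁) ≤ c * S₀ := by
    have h7 : S x₁ - S y₁ ≤ S₀ := by
      have := (hSbd x₁).2
      have := (hSbd y₁).1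
      linarith
    exact mul_le_mul_of_nonneg_left h7 hc.le
  have h0 : c * (I y₁ - I x₁) = 0 := by rw [hx₁B, hy₁B]; ring
  rw [splitI] at keyI
  rw [splitS] at keyS
  have main : μ₂ * (B*(y₁-x₁)) ≤ K + Λ * (y₁ - x₁) := by
    have hKval : K = E*(2*d₂+μ₂)*B + d₂*E*B + c*S₀ + 2*d₁*S₀ := hKdef
    linarith only [keyI, keyS, hd2b1, hd2b2, hd2b3, hd2b4, hd1c1, hd1c2, hd1c3, hd1c4,
      hμ₁V, hμ₂Q, hcS', h0, hKval]
  have hgap : y₁ - x₁ ≤ K := by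
    have h8 : (Λ+1) * (y₁ - x₁) ≤ μ₂ * (B * (y₁ - x₁)) := by
      have h9 := mul_le_mul_of_nonneg_right hB1
        (show (0:ℝ) ≤ y₁ - x₁ by linarith only [hx₁y₁])
      linarith only [h9]
    linarith only [main, h8]
  have final : I p ≤ M := by
    calc I p ≤ Real.exp (k*(y₁-p)) * I y₁ := Gb p y₁ hpy₁.le
      _ = Real.exp (k*(y₁-p)) * B := by rw [hy₁B]
      _ ≤ Real.exp (k*K) * B := by
          refine mul_le_mul_of_nonneg_right ?_ hBpos.le
          exact Real.exp_le_exp.mpr (mul_le_mul_of_nonneg_left (by linarith) hk.le)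
      _ = M := by rw [hMdef]
  linarith only [hpM, final]
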